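/- Let L ∈ ℕ, R > 0, 0 < c ≤ R, α ≥ 0, μ₀ > 0, and let g : ℂ → ℂ be analytic on the open disk {w ∈ ℂ : |w| < R}. Let μ ∈ (0, μ₀] and let f(z) = Σ_{ℓ=1}^{L+1} f^{(ℓ)} z^ℓ be a polynomial with complex coefficients satisfying |f^{(ℓ)}| ≤ c μ^{−ℓα} for ℓ = 1,…,L+1, and set r := min{μ^α/3, R/3}. Then |f(z)| ≤ R/2 for all |z| ≤ r, the composition g∘f is analytic on {|z| < r}, and there exists a constant C > 0 depending only on L, R, α, μ₀, and M_g := sup_{|w| ≤ R/2} |g(w)| (but not on μ or f) such that the Taylor coefficients of g∘f at 0 satisfy |(1/ℓ!) (g∘f)^{(ℓ)}(0)| ≤ C μ^{−ℓα} for all ℓ = 0,…,L−1. -/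

import Mathlib

open Real Metric Finset NNReal

/-- Geometric tail bound. -/
lemma geom_aux (n : ℕ) : ∑ ℓ ∈ Finset.Icc 1 n, (1/3 : ℝ) ^ ℓ ≤ 1/2 - (1/2) * (1/3) ^ n := by
  induction n with
  | zero => simp
  | succ n ih =>
    rw [Finset.sum_Icc_succ_top (by omega)]
    have h3 : (0:ℝ) ≤ (1/3 : ℝ) ^ n := by positivity
    have e : (1/3:ℝ) ^ (n+1) = (1/3) ^ n * (1/3) := pow_succ _ _
    nlinarith

/-- uniform bounds on the Taylor coefficients of the composition `g ∘ f`. -/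
theorem stmt_14 (L : ℕ) (R c α μ₀ : ℝ) (hR : 0 < R) (hc : 0 < c) (hcR : c ≤ R)
    (hα : 0 ≤ α) (hμ₀ : 0 < μ₀) (g : ℂ → ℂ)
    (hg : DifferentiableOn ℂ g (Metric.ball (0 : ℂ) R)) :
    ∃ C : ℝ, 0 < C ∧
      ∀ μ : ℝ, μ ∈ Set.Ioc 0 μ₀ → ∀ fc : ℕ → ℂ,
        (∀ ℓ : ℕ, 1 ≤ ℓ → ℓ ≤ L + 1 → ‖fc ℓ‖ ≤ c * μ ^ (-(ℓ : ℝ) * α)) →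
        (∀ z : ℂ, ‖z‖ ≤ min (μ ^ α / 3) (R / 3) →
          ‖∑ ℓ ∈ Finset.Icc 1 (L + 1), fc ℓ * z ^ ℓ‖ ≤ R / 2) ∧
        DifferentiableOn ℂ (fun z : ℂ => g (∑ ℓ ∈ Finset.Icc 1 (L + 1), fc ℓ * z ^ ℓ))
          (Metric.ball (0 : ℂ) (min (μ ^ α / 3) (R / 3))) ∧
        ∀ ℓ : ℕ, ℓ < L →
          ‖
              (iteratedDeriv ℓ (fun z : ℂ => g (∑ k ∈ Finset.Icc 1 (L + 1), fc k * z ^ k)) 0 /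
                (Nat.factorial ℓ : ℂ))‖ ≤
            C * μ ^ (-(ℓ : ℝ) * α) := by
  -- a bound for `g` on the closed ball of radius `R/2`
  obtain ⟨Mg, hMg⟩ : ∃ Mg : ℝ, ∀ w ∈ Metric.closedBall (0:ℂ) (R/2), ‖g w‖ ≤ Mg := by
    have hsub : Metric.closedBall (0:ℂ) (R/2) ⊆ Metric.ball 0 R :=
      Metric.closedBall_subset_ball (by linarith)
    exact (isCompact_closedBall _ _).exists_bound_of_continuousOn
      (hg.continuousOn.mono hsub)
  have hMg0 : 0 ≤ Mg :=
    (norm_nonneg _).trans (hMg 0 (Metric.mem_closedBall_self (by linarith)))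
  set K : ℝ := 6 * (1 + μ₀ ^ α) * (1 + R⁻¹) with hKdef
  have hμ₀α : 0 ≤ μ₀ ^ α := Real.rpow_nonneg hμ₀.le α
  have hRinv : 0 < R⁻¹ := inv_pos.mpr hR
  have hK6 : (6:ℝ) ≤ K := by
    have h1 : (1:ℝ) ≤ 1 + μ₀ ^ α := by linarith
    have h2 : (1:ℝ) ≤ 1 + R⁻¹ := by linarith
    nlinarith
  have hK1 : (1:ℝ) ≤ K := by linarith
  have hK0 : 0 < K := by linarith
  refine ⟨(Mg + 1) * K ^ L, by positivity, ?_⟩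
  intro μ hμ fc hfc
  obtain ⟨hμ0, hμμ₀⟩ := hμ
  have hA : 0 < μ ^ α := Real.rpow_pos_of_pos hμ0 α
  set r : ℝ := min (μ ^ α / 3) (R / 3) with hrdef
  have hr0 : 0 < r := lt_min (by linarith) (by linarith)
  -- termwise coefficient times power bound
  have hterm : ∀ ℓ : ℕ, 1 ≤ ℓ → ℓ ≤ L + 1 →
      c * μ ^ (-(ℓ : ℝ) * α) * r ^ ℓ ≤ c * (1/3) ^ ℓ := by
    intro ℓ h1 h2
    have hrle : r ≤ μ ^ α / 3 := min_le_left _ _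
    have hpow : r ^ ℓ ≤ (μ ^ α / 3) ^ ℓ := pow_le_pow_left₀ hr0.le hrle ℓ
    have hid : μ ^ (-(ℓ : ℝ) * α) * (μ ^ α / 3) ^ ℓ = (1/3) ^ ℓ := by
      rw [div_pow, ← Real.rpow_natCast (μ ^ α) ℓ, ← Real.rpow_mul hμ0.le,
        mul_div_assoc', ← Real.rpow_add hμ0]
      ring_nf
      rw [Real.rpow_zero]
      ring
    calc c * μ ^ (-(ℓ : ℝ) * α) * r ^ ℓ
        ≤ c * μ ^ (-(ℓ : ℝ) * α) * (μ ^ α / 3) ^ ℓ := by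
          apply mul_le_mul_of_nonneg_left hpow
          positivity
      _ = c * (1/3) ^ ℓ := by rw [mul_assoc, hid]
  -- part 1 : the polynomial is bounded by `R/2`
  have hfz : ∀ z : ℂ, ‖z‖ ≤ r →
      ‖∑ ℓ ∈ Finset.Icc 1 (L + 1), fc ℓ * z ^ ℓ‖ ≤ R / 2 := by
    intro z hz
    calc ‖∑ ℓ ∈ Finset.Icc 1 (L + 1), fc ℓ * z ^ ℓ‖
        ≤ ∑ ℓ ∈ Finset.Icc 1 (L + 1), ‖fc ℓ * z ^ ℓ‖ :=
          norm_sum_le _ _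
      _ ≤ ∑ ℓ ∈ Finset.Icc 1 (L + 1), c * (1/3) ^ ℓ := by
          apply Finset.sum_le_sum
          intro ℓ hℓ
          rw [Finset.mem_Icc] at hℓ
          rw [norm_mul, norm_pow]
          calc ‖fc ℓ‖ * ‖z‖ ^ ℓ
              ≤ (c * μ ^ (-(ℓ : ℝ) * α)) * r ^ ℓ := by
                apply mul_le_mul (hfc ℓ hℓ.1 hℓ.2) (pow_le_pow_left₀ (norm_nonneg z) hz ℓ)
                  (by positivity) (by positivity)
            _ ≤ c * (1/3) ^ ℓ := hterm ℓ hℓ.1 hℓ.2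
      _ = c * ∑ ℓ ∈ Finset.Icc 1 (L + 1), (1/3:ℝ) ^ ℓ := by rw [Finset.mul_sum]
      _ ≤ c * (1/2) := by
          apply mul_le_mul_of_nonneg_left _ hc.le
          have := geom_aux (L + 1)
          have h3 : (0:ℝ) ≤ (1/3 : ℝ) ^ (L+1) := by positivity
          linarith
      _ ≤ R / 2 := by linarith
  -- the polynomial is differentiable
  have hpoly : Differentiable ℂ (fun z : ℂ => ∑ ℓ ∈ Finset.Icc 1 (L + 1), fc ℓ * z ^ ℓ) := by
    apply Differentiable.fun_sum
    intro i _
    exact (differentiable_const _).mul (differentiable_pow i)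
  -- part 2 : differentiability of composition
  have hmaps : Set.MapsTo (fun z : ℂ => ∑ ℓ ∈ Finset.Icc 1 (L + 1), fc ℓ * z ^ ℓ)
      (Metric.ball 0 r) (Metric.ball 0 R) := by
    intro z hz
    rw [mem_ball_zero_iff] at hz ⊢
    have := hfz z hz.le
    calc ‖∑ ℓ ∈ Finset.Icc 1 (L + 1), fc ℓ * z ^ ℓ‖ ≤ R / 2 := this
      _ < R := by linarith
  have hcomp : DifferentiableOn ℂ
      (fun z : ℂ => g (∑ ℓ ∈ Finset.Icc 1 (L + 1), fc ℓ * z ^ ℓ)) (Metric.ball 0 r) :=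
    hg.comp hpoly.differentiableOn hmaps
  refine ⟨hfz, hcomp, ?_⟩
  -- part 3 : Cauchy estimates
  intro ℓ hℓL
  set h : ℂ → ℂ := fun z : ℂ => g (∑ k ∈ Finset.Icc 1 (L + 1), fc k * z ^ k) with hhdef
  set ρ : ℝ≥0 := ⟨r / 2, by positivity⟩ with hρdef
  have hρr : (ρ : ℝ) < r := by
    show r / 2 < r; linarith
  have hρpos : (0:ℝ≥0) < ρ := by
    rw [← NNReal.coe_lt_coe]; show (0:ℝ) < r/2; linarith
  have hdiff : DifferentiableOn ℂ h (Metric.closedBall 0 (ρ:ℝ)) :=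
    hcomp.mono (Metric.closedBall_subset_ball hρr)
  have hP := hdiff.hasFPowerSeriesOnBall hρpos
  -- bound on the Cauchy power series coefficient
  have hbound : ∀ θ : ℝ, ‖h (circleMap 0 (ρ:ℝ) θ)‖ ≤ Mg := by
    intro θ
    apply hMg
    rw [Metric.mem_closedBall, dist_zero_right]
    apply hfz
    rw [norm_circleMap_zero, abs_of_nonneg ρ.coe_nonneg]
    · exact hρr.le
  have hcont : ContinuousOn (fun θ : ℝ => ‖h (circleMap 0 (ρ:ℝ) θ)‖) (Set.uIcc 0 (2*π)) := by
    apply ContinuousOn.norm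
    apply hcomp.continuousOn.comp (continuous_circleMap 0 (ρ:ℝ)).continuousOn
    intro θ _
    rw [Metric.mem_ball, dist_zero_right, norm_circleMap_zero,
      abs_of_nonneg ρ.coe_nonneg]
    exact hρr
  have hint : (∫ θ : ℝ in (0)..2 * π, ‖h (circleMap 0 (ρ:ℝ) θ)‖) ≤ 2 * π * Mg := by
    have h1 : IntervalIntegrable (fun θ : ℝ => ‖h (circleMap 0 (ρ:ℝ) θ)‖)
        MeasureTheory.volume 0 (2*π) := hcont.intervalIntegrable
    calc (∫ θ : ℝ in (0)..2 * π, ‖h (circleMap 0 (ρ:ℝ) θ)‖)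
        ≤ ∫ _ : ℝ in (0)..2 * π, Mg := by
          apply intervalIntegral.integral_mono_on Real.two_pi_pos.le h1
            intervalIntegrable_const
          intro θ _
          exact hbound θ
      _ = 2 * π * Mg := by
          rw [intervalIntegral.integral_const, smul_eq_mul]; ring
  have hcoeff : ‖cauchyPowerSeries h 0 (ρ:ℝ) ℓ‖ ≤ Mg * ((ρ:ℝ)⁻¹) ^ ℓ := by
    refine (norm_cauchyPowerSeries_le h 0 (ρ:ℝ) ℓ).trans ?_
    rw [abs_of_nonneg ρ.coe_nonneg]
    apply mul_le_mul_of_nonneg_right _ (by positivity)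
    calc (2 * π)⁻¹ * ∫ θ : ℝ in (0)..2 * π, ‖h (circleMap 0 (ρ:ℝ) θ)‖
        ≤ (2 * π)⁻¹ * (2 * π * Mg) := by
          apply mul_le_mul_of_nonneg_left hint
          positivity
      _ = Mg := by
          field_simp
  -- relate the iterated derivative to the coefficient
  have hfact := hP.factorial_smul (1:ℂ) ℓ
  have hderiv : ‖iteratedDeriv ℓ h 0‖ ≤ (ℓ.factorial : ℝ) * (Mg * ((ρ:ℝ)⁻¹) ^ ℓ) := by
    rw [iteratedDeriv_eq_iteratedFDeriv, ← hfact, ← Nat.cast_smul_eq_nsmul ℂ, norm_smul,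
      Complex.norm_natCast]
    apply mul_le_mul_of_nonneg_left _ (by positivity)
    calc ‖cauchyPowerSeries h 0 (ρ:ℝ) ℓ (fun _ => (1:ℂ))‖
        ≤ ‖cauchyPowerSeries h 0 (ρ:ℝ) ℓ‖ * ∏ _i : Fin ℓ, ‖(1:ℂ)‖ :=
          ContinuousMultilinearMap.le_opNorm _ _
      _ = ‖cauchyPowerSeries h 0 (ρ:ℝ) ℓ‖ := by simp
      _ ≤ Mg * ((ρ:ℝ)⁻¹) ^ ℓ := hcoeff
  -- bound `ρ⁻¹` in terms of `μ`
  have hρinv : ((ρ:ℝ))⁻¹ ≤ K * μ ^ (-α) := by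
    have hAμ₀ : μ ^ α ≤ μ₀ ^ α := Real.rpow_le_rpow hμ0.le hμμ₀ hα
    have hKρ : μ ^ α ≤ K * (ρ:ℝ) := by
      show μ ^ α ≤ K * (r / 2)
      rcases le_total (μ ^ α) R with hAR | hRA
      · have : r = μ ^ α / 3 := min_eq_left (by linarith)
        rw [this]
        nlinarith [hA.le, hK6]
      · have : r = R / 3 := min_eq_right (by linarith)
        rw [this]
        have hRne : R ≠ 0 := hR.ne'
        have hexp : K * (R / 3 / 2) = (1 + μ₀ ^ α) * (R + 1) := by
          rw [hKdef]
          field_simp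
          ring
        rw [hexp]
        nlinarith
    rw [Real.rpow_neg hμ0.le]
    rw [inv_le_iff_one_le_mul₀ (by exact_mod_cast hρpos)]
    calc (1:ℝ) = μ ^ α * (μ ^ α)⁻¹ := by rw [mul_inv_cancel₀ hA.ne']
      _ ≤ (K * (ρ:ℝ)) * (μ ^ α)⁻¹ := by
          exact mul_le_mul_of_nonneg_right hKρ (by positivity)
      _ = K * (μ ^ α)⁻¹ * (ρ:ℝ) := by ring
  -- finish
  have hμℓ : ((μ:ℝ) ^ (-α)) ^ ℓ = μ ^ (-(ℓ : ℝ) * α) := by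
    rw [← Real.rpow_natCast (μ ^ (-α)) ℓ, ← Real.rpow_mul hμ0.le]
    ring_nf
  have hμℓ0 : (0:ℝ) < μ ^ (-(ℓ : ℝ) * α) := Real.rpow_pos_of_pos hμ0 _
  have key : ‖iteratedDeriv ℓ h 0‖ / (ℓ.factorial : ℝ) ≤ (Mg + 1) * K ^ L * μ ^ (-(ℓ : ℝ) * α) := by
    rw [div_le_iff₀ (by positivity : (0:ℝ) < (ℓ.factorial : ℝ))]
    refine hderiv.trans ?_
    rw [mul_comm]
    apply mul_le_mul_of_nonneg_right _ (by positivity)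
    calc Mg * ((ρ:ℝ)⁻¹) ^ ℓ
        ≤ Mg * (K * μ ^ (-α)) ^ ℓ := by
          apply mul_le_mul_of_nonneg_left _ hMg0
          exact pow_le_pow_left₀ (by positivity) hρinv ℓ
      _ = Mg * K ^ ℓ * μ ^ (-(ℓ : ℝ) * α) := by rw [mul_pow, hμℓ]; ring
      _ ≤ (Mg + 1) * K ^ L * μ ^ (-(ℓ : ℝ) * α) := by
          apply mul_le_mul_of_nonneg_right _ hμℓ0.le
          have h1 : K ^ ℓ ≤ K ^ L := pow_le_pow_right₀ hK1 hℓL.le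
          have h2 : (0:ℝ) < K ^ ℓ := by positivity
          nlinarith
  calc ‖iteratedDeriv ℓ h 0 / (Nat.factorial ℓ : ℂ)‖
      = ‖iteratedDeriv ℓ h 0‖ / (ℓ.factorial : ℝ) := by
        rw [norm_div]
        norm_num [Complex.norm_natCast]
    _ ≤ (Mg + 1) * K ^ L * μ ^ (-(ℓ : ℝ) * α) := key
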